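/- arXiv:2011.13072 — 5 statements merged into one kernel-verified Lean document; each statement's English description precedes it below -/
import Mathlib

section
/- There exists a unique formal power series F ∈ ℂ[[t]] with constant coefficient 1 satisfying F(t·(1+2t)⁻¹) = F(t)·(1 − t²) in ℂ[[t]], where F(t·(1+2t)⁻¹) denotes substitution of the power series t·(1+2t)⁻¹ (which has zero constant term, so substitution is well defined) into F. -/
open PowerSeries

/-- Substitution of a power series `g` (with zero constant coefficient) into a power
series `F`: the `n`-th coefficient of `F(g)` is `∑_{k ≤ n} (coeff k F) · coeff n (g^k)`.
(When the constant coefficient of `g` is zero, `coeff n (g^k) = 0` for `k > n`, so this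
is the usual substitution.) -/
noncomputable def psSubst (g F : PowerSeries ℂ) : PowerSeries ℂ :=
  PowerSeries.mk fun n =>
    ∑ k ∈ Finset.range (n + 1), PowerSeries.coeff k F * PowerSeries.coeff n (g ^ k)

noncomputable def uu : PowerSeries ℂ := (1 + 2 * PowerSeries.X)⁻¹

noncomputable def gg : PowerSeries ℂ := PowerSeries.X * uu

lemma huu : (1 + 2 * PowerSeries.X) * uu = 1 := by
  apply PowerSeries.mul_inv_cancel
  simp

lemma uu0 : PowerSeries.constantCoeff uu = 1 := by
  rw [uu, PowerSeries.constantCoeff_inv]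
  simp

lemma uu1 : PowerSeries.coeff 1 uu = -2 := by
  have h := congrArg (PowerSeries.coeff 1) huu
  rw [PowerSeries.coeff_mul, Finset.Nat.sum_antidiagonal_eq_sum_range_succ_mk] at h
  simp [Finset.sum_range_succ, coeff_zero_eq_constantCoeff, uu0, map_ofNat] at h
  linear_combination h

lemma uu_pow0 (k : ℕ) : PowerSeries.constantCoeff (uu ^ k) = 1 := by
  rw [map_pow, uu0, one_pow]

lemma uu_pow1 (k : ℕ) : PowerSeries.coeff 1 (uu ^ k) = -2 * k := by
  induction k with
  | zero => simp
  | succ n ih =>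
    rw [pow_succ, PowerSeries.coeff_mul, Finset.Nat.sum_antidiagonal_eq_sum_range_succ_mk]
    simp only [Finset.sum_range_succ, Finset.sum_range_zero, Nat.sub_self, Nat.sub_zero,
      coeff_zero_eq_constantCoeff]
    rw [uu_pow0, uu0, uu1, ih]
    push_cast; ring

lemma c_eq (n k : ℕ) : PowerSeries.coeff n (gg ^ k)
    = if k ≤ n then PowerSeries.coeff (n - k) (uu ^ k) else 0 := by
  rw [gg, mul_pow, mul_comm, PowerSeries.coeff_mul_X_pow']

lemma c_diag (n : ℕ) : PowerSeries.coeff n (gg ^ n) = 1 := by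
  rw [c_eq, if_pos le_rfl, Nat.sub_self, coeff_zero_eq_constantCoeff, uu_pow0]

lemma c_sub (m : ℕ) : PowerSeries.coeff (m + 2) (gg ^ (m + 1)) = -2 * (m + 1) := by
  rw [c_eq, if_pos (by omega), show m + 2 - (m + 1) = 1 from by omega, uu_pow1]
  push_cast; ring

noncomputable def aa : ℕ → ℂ
  | 0 => 1
  | m + 1 => (aa m + ∑ k ∈ (Finset.range (m + 1)).attach,
      aa k * PowerSeries.coeff (m + 2) (gg ^ (k : ℕ))) / (2 * (m + 1))
  decreasing_by
  · exact Nat.lt_succ_self m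
  · exact Finset.mem_range.mp k.2

lemma aa_succ (m : ℕ) : aa (m + 1) = (aa m + ∑ k ∈ Finset.range (m + 1),
    aa k * PowerSeries.coeff (m + 2) (gg ^ k)) / (2 * (m + 1)) := by
  rw [aa, Finset.sum_attach (Finset.range (m + 1))
    (fun k => aa k * PowerSeries.coeff (m + 2) (gg ^ k))]

lemma coeff_key (F : PowerSeries ℂ) (m : ℕ) :
    (PowerSeries.coeff (m + 2) (psSubst gg F)
      = PowerSeries.coeff (m + 2) (F * (1 - PowerSeries.X ^ 2))) ↔
    (∑ k ∈ Finset.range (m + 1),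
        PowerSeries.coeff k F * PowerSeries.coeff (m + 2) (gg ^ k))
      - 2 * (m + 1) * PowerSeries.coeff (m + 1) F = - PowerSeries.coeff m F := by
  rw [psSubst, PowerSeries.coeff_mk, Finset.sum_range_succ, Finset.sum_range_succ,
    c_diag, c_sub, mul_sub, map_sub, PowerSeries.coeff_mul_X_pow',
    if_pos (by omega : 2 ≤ m + 2), show m + 2 - 2 = m from rfl]
  simp only [mul_one]
  constructor <;> intro h <;> linear_combination h

lemma eq_lowdeg (F : PowerSeries ℂ) :
    PowerSeries.coeff 0 (psSubst gg F) = PowerSeries.coeff 0 (F * (1 - PowerSeries.X ^ 2))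
    ∧ PowerSeries.coeff 1 (psSubst gg F) = PowerSeries.coeff 1 (F * (1 - PowerSeries.X ^ 2)) := by
  constructor
  · rw [psSubst, PowerSeries.coeff_mk, mul_sub, mul_one, map_sub,
      PowerSeries.coeff_mul_X_pow', if_neg (by omega : ¬ 2 ≤ 0)]
    simp
  · rw [psSubst, PowerSeries.coeff_mk, mul_sub, mul_one, map_sub,
      PowerSeries.coeff_mul_X_pow', if_neg (by omega : ¬ 2 ≤ 1)]
    rw [Finset.sum_range_succ, Finset.sum_range_succ, Finset.sum_range_zero, c_diag]
    simp

lemma eq_iff (F : PowerSeries ℂ) :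
    psSubst gg F = F * (1 - PowerSeries.X ^ 2) ↔
    ∀ m : ℕ, (∑ k ∈ Finset.range (m + 1),
        PowerSeries.coeff k F * PowerSeries.coeff (m + 2) (gg ^ k))
      - 2 * (m + 1) * PowerSeries.coeff (m + 1) F = - PowerSeries.coeff m F := by
  rw [PowerSeries.ext_iff]
  constructor
  · intro h m
    exact (coeff_key F m).mp (h (m + 2))
  · intro h n
    match n with
    | 0 => exact (eq_lowdeg F).1
    | 1 => exact (eq_lowdeg F).2
    | (m + 2) => exact (coeff_key F m).mpr (h m)

lemma two_succ_ne (m : ℕ) : (2 * ((m : ℂ) + 1)) ≠ 0 := by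
  exact mul_ne_zero two_ne_zero (Nat.cast_add_one_ne_zero m)

lemma aa_rec (m : ℕ) : (∑ k ∈ Finset.range (m + 1), aa k * PowerSeries.coeff (m + 2) (gg ^ k))
    - 2 * (m + 1) * aa (m + 1) = - aa m := by
  rw [aa_succ, mul_div_cancel₀ _ (two_succ_ne m)]
  ring

/-- There exists a unique `F ∈ ℂ[[t]]` with constant coefficient `1` such that
`F(t·(1+2t)⁻¹) = F(t)·(1 − t²)`. -/
theorem exists_unique_normalizing_series :
    ∃! F : PowerSeries ℂ,
      PowerSeries.constantCoeff F = 1 ∧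
        psSubst (PowerSeries.X * (1 + 2 * PowerSeries.X)⁻¹) F
          = F * (1 - PowerSeries.X ^ 2) := by
  have hgg : PowerSeries.X * (1 + 2 * PowerSeries.X)⁻¹ = gg := rfl
  refine ⟨PowerSeries.mk aa, ⟨?_, ?_⟩, ?_⟩
  · simp [aa]
  · rw [hgg, eq_iff]
    intro m
    simpa using aa_rec m
  · rintro F ⟨hF0, hFeq⟩
    rw [hgg, eq_iff] at hFeq
    have key : ∀ n, PowerSeries.coeff n F = aa n := by
      intro n
      induction n using Nat.strong_induction_on with
      | _ n ih =>
        match n with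
        | 0 => simpa [aa] using hF0
        | (m + 1) =>
          have h1 := hFeq m
          have h2 := aa_rec m
          rw [ih m (by omega)] at h1
          rw [Finset.sum_congr rfl (fun k hk => by
            rw [ih k (by simpa using Finset.mem_range.mp hk)])] at h1
          have h3 : 2 * ((m : ℂ) + 1) * PowerSeries.coeff (m + 1) F
              = 2 * ((m : ℂ) + 1) * aa (m + 1) := by linear_combination h2 - h1
          exact mul_left_cancel₀ (two_succ_ne m) h3
    exact PowerSeries.ext fun n => by rw [key n, PowerSeries.coeff_mk]
end

section
/- Let F ∈ ℂ[[t]] be the unique formal power series with constant coefficient 1 satisfying F(t·(1+2t)⁻¹) = F(t)·(1 − t²). Then F(t)·F(−t)·(1 − t²) = 1 in ℂ[[t]], where F(−t) denotes substitution of −t into F. -/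
open PowerSeries

namespace PsSubstAux

lemma coeff_psSubst (g F : PowerSeries ℂ) (n : ℕ) :
    coeff n (psSubst g F) =
      ∑ k ∈ Finset.range (n + 1), coeff k F * coeff n (g ^ k) := by
  simp [psSubst]

lemma coeff_pow_zero {g : PowerSeries ℂ} (hg : constantCoeff g = 0)
    {n k : ℕ} (h : n < k) : coeff n (g ^ k) = 0 := by
  obtain ⟨c, rfl⟩ := X_dvd_iff.mpr hg
  rw [mul_pow, coeff_mul]
  apply Finset.sum_eq_zero
  rintro ⟨i, j⟩ hij
  rw [Finset.HasAntidiagonal.mem_antidiagonal] at hij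
  rw [coeff_X_pow, if_neg, zero_mul]
  omega

lemma coeff_psSubst_ext {g : PowerSeries ℂ} (hg : constantCoeff g = 0)
    (F : PowerSeries ℂ) {n m : ℕ} (h : n < m) :
    coeff n (psSubst g F) = ∑ k ∈ Finset.range m, coeff k F * coeff n (g ^ k) := by
  rw [coeff_psSubst]
  apply Finset.sum_subset (Finset.range_subset_range.mpr h)
  intro k hk hk'
  rw [Finset.mem_range] at hk hk'
  rw [coeff_pow_zero hg (by omega), mul_zero]

lemma coeff_aeval {g : PowerSeries ℂ} (hg : constantCoeff g = 0)
    (p q : Polynomial ℂ) {n : ℕ} (h : ∀ j, j ≤ n → p.coeff j = q.coeff j) :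
    coeff n (Polynomial.aeval g p) = coeff n (Polynomial.aeval g q) := by
  set N := max (p.natDegree + 1) (q.natDegree + 1) with hN
  rw [Polynomial.aeval_eq_sum_range' (lt_of_lt_of_le (Nat.lt_succ_self _) (le_max_left _ _)) g,
    Polynomial.aeval_eq_sum_range' (lt_of_lt_of_le (Nat.lt_succ_self _) (le_max_right _ _)) g,
    map_sum, map_sum]
  apply Finset.sum_congr rfl
  intro i _
  rcases le_or_gt i n with hi | hi
  · rw [h i hi]
  · rw [coeff_smul, coeff_smul, coeff_pow_zero hg hi, smul_zero, smul_zero]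

lemma psSubst_eq_aeval {g : PowerSeries ℂ} (hg : constantCoeff g = 0)
    (F : PowerSeries ℂ) {n m : ℕ} (h : n ≤ m) :
    coeff n (psSubst g F) = coeff n (Polynomial.aeval g (trunc (m + 1) F)) := by
  rw [coeff_psSubst_ext hg F (Nat.lt_succ_of_le h),
    Polynomial.aeval_eq_sum_range' (natDegree_trunc_lt F m) g, map_sum]
  apply Finset.sum_congr rfl
  intro i hi
  rw [Finset.mem_range] at hi
  rw [coeff_smul, coeff_trunc, if_pos hi, smul_eq_mul]

lemma psSubst_mul {g : PowerSeries ℂ} (hg : constantCoeff g = 0)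
    (F G : PowerSeries ℂ) : psSubst g (F * G) = psSubst g F * psSubst g G := by
  ext n
  rw [psSubst_eq_aeval hg (F * G) (le_refl n), coeff_mul]
  have h2 : ∀ p : ℕ × ℕ, p ∈ Finset.HasAntidiagonal.antidiagonal n →
      coeff p.1 (psSubst g F) * coeff p.2 (psSubst g G) =
      coeff p.1 (Polynomial.aeval g (trunc (n + 1) F)) *
        coeff p.2 (Polynomial.aeval g (trunc (n + 1) G)) := by
    rintro ⟨i, j⟩ hij
    rw [Finset.HasAntidiagonal.mem_antidiagonal] at hij
    rw [psSubst_eq_aeval hg F (show i ≤ n by omega),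
      psSubst_eq_aeval hg G (show j ≤ n by omega)]
  rw [Finset.sum_congr rfl h2, ← coeff_mul, ← map_mul]
  apply coeff_aeval hg
  intro j hj
  rw [coeff_trunc, if_pos (Nat.lt_succ_of_le hj),
    coeff_mul_eq_coeff_trunc_mul_trunc F G (Nat.lt_succ_of_le hj),
    ← Polynomial.coe_mul, Polynomial.coeff_coe]

lemma psSubst_one (g : PowerSeries ℂ) : psSubst g 1 = 1 := by
  ext n
  rw [coeff_psSubst]
  rw [Finset.sum_eq_single 0]
  · simp
  · intro k _ hk
    rw [coeff_one, if_neg hk, zero_mul]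
  · intro h
    simp at h

lemma psSubst_pow {g : PowerSeries ℂ} (hg : constantCoeff g = 0)
    (b : PowerSeries ℂ) (j : ℕ) : psSubst g (b ^ j) = (psSubst g b) ^ j := by
  induction j with
  | zero => simpa using psSubst_one g
  | succ j ih => rw [pow_succ, pow_succ, psSubst_mul hg, ih]

lemma psSubst_comp {a b : PowerSeries ℂ} (ha : constantCoeff a = 0)
    (hb : constantCoeff b = 0) (F : PowerSeries ℂ) :
    psSubst a (psSubst b F) = psSubst (psSubst a b) F := by
  ext n
  rw [coeff_psSubst, coeff_psSubst]
  have h1 : ∀ k ∈ Finset.range (n + 1),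
      coeff k (psSubst b F) * coeff n (a ^ k) =
      ∑ j ∈ Finset.range (n + 1),
        coeff j F * coeff k (b ^ j) * coeff n (a ^ k) := by
    intro k hk
    rw [Finset.mem_range] at hk
    rw [coeff_psSubst_ext hb F (show k < n + 1 by omega), Finset.sum_mul]
  rw [Finset.sum_congr rfl h1, Finset.sum_comm]
  apply Finset.sum_congr rfl
  intro j _
  rw [← psSubst_pow ha, coeff_psSubst, Finset.mul_sum]
  apply Finset.sum_congr rfl
  intro k _
  ring

lemma psSubst_add (g F G : PowerSeries ℂ) :
    psSubst g (F + G) = psSubst g F + psSubst g G := by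
  ext n
  simp [coeff_psSubst, add_mul, Finset.sum_add_distrib]

lemma psSubst_C_mul (g : PowerSeries ℂ) (c : ℂ) (F : PowerSeries ℂ) :
    psSubst g (C c * F) = C c * psSubst g F := by
  ext n
  simp [coeff_psSubst, Finset.mul_sum, mul_assoc]

lemma psSubst_neg (g F : PowerSeries ℂ) : psSubst g (-F) = -psSubst g F := by
  have := psSubst_C_mul g (-1) F
  simpa using this

lemma psSubst_sub (g F G : PowerSeries ℂ) :
    psSubst g (F - G) = psSubst g F - psSubst g G := by
  rw [sub_eq_add_neg, sub_eq_add_neg, psSubst_add, psSubst_neg]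

lemma psSubst_X {g : PowerSeries ℂ} (hg : constantCoeff g = 0) :
    psSubst g X = g := by
  ext n
  rw [coeff_psSubst]
  rcases Nat.eq_zero_or_pos n with rfl | hn
  · simpa [coeff_X] using hg.symm
  · rw [Finset.sum_eq_single 1]
    · simp
    · intro k _ hk
      rw [coeff_X, if_neg hk, zero_mul]
    · intro h
      rw [Finset.mem_range] at h
      omega

lemma coeff_neg_pow (f : PowerSeries ℂ) (k n : ℕ) :
    coeff n ((-f) ^ k) = (-1 : ℂ) ^ k * coeff n (f ^ k) := by
  have h : (-f) ^ k = C ((-1 : ℂ) ^ k) * f ^ k := by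
    rw [← neg_one_mul, mul_pow, map_pow, map_neg, map_one]
  rw [h, coeff_C_mul]

lemma psSubst_negX (F : PowerSeries ℂ) :
    psSubst (-X) F = rescale (-1 : ℂ) F := by
  ext n
  rw [coeff_psSubst, coeff_rescale]
  rw [Finset.sum_eq_single n]
  · rw [coeff_neg_pow, coeff_X_pow, if_pos rfl]
    ring
  · intro k _ hk
    rw [coeff_neg_pow, coeff_X_pow, if_neg (fun h => hk h.symm)]
    ring
  · intro h
    simp at h

lemma psSubst_rescale_neg_one {g : PowerSeries ℂ} (F : PowerSeries ℂ) :
    psSubst g (rescale (-1 : ℂ) F) = psSubst (-g) F := by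
  ext n
  rw [coeff_psSubst, coeff_psSubst]
  apply Finset.sum_congr rfl
  intro k _
  rw [coeff_rescale, coeff_neg_pow]
  ring

noncomputable def sig : PowerSeries ℂ := X * (1 + 2 * X)⁻¹

lemma sig_def : sig = X * (1 + 2 * X)⁻¹ := rfl

lemma const_u : constantCoeff (1 + 2 * X : PowerSeries ℂ) = 1 := by simp

lemma const_v : constantCoeff (1 - 2 * X : PowerSeries ℂ) = 1 := by simp

lemma u_mul_inv : (1 + 2 * X : PowerSeries ℂ) * (1 + 2 * X)⁻¹ = 1 :=
  PowerSeries.mul_inv_cancel _ (by simp)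

lemma v_mul_inv : (1 - 2 * X : PowerSeries ℂ) * (1 - 2 * X)⁻¹ = 1 :=
  PowerSeries.mul_inv_cancel _ (by simp)

lemma const_sig : constantCoeff sig = 0 := by simp [sig]

lemma const_rho : constantCoeff (-X * (1 - 2 * X : PowerSeries ℂ)⁻¹) = 0 := by simp

lemma rescale_u : rescale (-1 : ℂ) (1 + 2 * X) = 1 - 2 * X := by
  rw [map_add, map_one, map_mul, map_ofNat, rescale_neg_one_X]
  ring

lemma rescale_u_inv :
    rescale (-1 : ℂ) ((1 + 2 * X : PowerSeries ℂ)⁻¹) = (1 - 2 * X)⁻¹ := by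
  have h : rescale (-1 : ℂ) ((1 + 2 * X : PowerSeries ℂ)⁻¹) * (1 - 2 * X) = 1 := by
    rw [← rescale_u, ← map_mul, mul_comm, u_mul_inv, map_one]
  rw [PowerSeries.eq_inv_iff_mul_eq_one (by simp)]
  exact h

lemma rescale_sig : rescale (-1 : ℂ) sig = -X * (1 - 2 * X)⁻¹ := by
  rw [sig_def, map_mul, rescale_neg_one_X, rescale_u_inv]

lemma rescale_psSubst (c : ℂ) (g F : PowerSeries ℂ) :
    rescale c (psSubst g F) = psSubst (rescale c g) F := by
  ext n
  rw [coeff_rescale, coeff_psSubst, coeff_psSubst, Finset.mul_sum]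
  apply Finset.sum_congr rfl
  intro k _
  rw [← map_pow, coeff_rescale]
  ring

lemma two_X_eq : (2 * X : PowerSeries ℂ) = C 2 * X := by
  rw [map_ofNat]

lemma psSubst_sig_v : psSubst sig (1 - 2 * X) = (1 + 2 * X)⁻¹ := by
  have hv : psSubst sig (1 - 2 * X) = 1 - 2 * sig := by
    rw [two_X_eq, psSubst_sub, psSubst_one, psSubst_C_mul, psSubst_X const_sig, map_ofNat]
  rw [hv]
  calc (1 : PowerSeries ℂ) - 2 * sig
      = (1 + 2 * X) * (1 + 2 * X)⁻¹ - 2 * (X * (1 + 2 * X)⁻¹) := by rw [u_mul_inv, sig_def]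
    _ = ((1 + 2 * X) - 2 * X) * (1 + 2 * X)⁻¹ := by ring
    _ = (1 + 2 * X)⁻¹ := by rw [add_sub_cancel_right, one_mul]

lemma psSubst_sig_vinv :
    psSubst sig ((1 - 2 * X : PowerSeries ℂ)⁻¹) = 1 + 2 * X := by
  have h : (1 + 2 * X : PowerSeries ℂ)⁻¹ * psSubst sig ((1 - 2 * X)⁻¹) = 1 := by
    rw [← psSubst_sig_v, ← psSubst_mul const_sig, v_mul_inv, psSubst_one]
  calc psSubst sig ((1 - 2 * X : PowerSeries ℂ)⁻¹)
      = (1 + 2 * X) * ((1 + 2 * X)⁻¹ * psSubst sig ((1 - 2 * X)⁻¹)) := by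
        rw [← mul_assoc, u_mul_inv, one_mul]
    _ = 1 + 2 * X := by rw [h, mul_one]

lemma psSubst_sig_rho : psSubst sig (-X * (1 - 2 * X)⁻¹) = -X := by
  rw [psSubst_mul const_sig, psSubst_neg, psSubst_X const_sig, psSubst_sig_vinv, sig_def]
  have h : (-(X * (1 + 2 * X)⁻¹) * (1 + 2 * X) : PowerSeries ℂ)
      = -(X * ((1 + 2 * X) * (1 + 2 * X)⁻¹)) := by ring
  rw [h, u_mul_inv, mul_one]

lemma coeff_one_mul (a b : PowerSeries ℂ) :
    coeff 1 (a * b) =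
      constantCoeff a * coeff 1 b + coeff 1 a * constantCoeff b := by
  rw [coeff_mul, Finset.Nat.sum_antidiagonal_eq_sum_range_succ_mk,
    Finset.sum_range_succ, Finset.sum_range_succ, Finset.sum_range_zero]
  simp [coeff_zero_eq_constantCoeff]

lemma const_u_pow (n : ℕ) : constantCoeff ((1 + 2 * X : PowerSeries ℂ) ^ n) = 1 := by
  rw [map_pow, const_u, one_pow]

lemma const_uinv : constantCoeff ((1 + 2 * X : PowerSeries ℂ)⁻¹) = 1 := by
  rw [PowerSeries.constantCoeff_inv, const_u, inv_one]

lemma coeff1_u_pow (n : ℕ) : coeff 1 ((1 + 2 * X : PowerSeries ℂ) ^ n) = 2 * n := by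
  induction n with
  | zero => simp
  | succ n ih =>
    rw [pow_succ, coeff_one_mul, const_u_pow, const_u, ih]
    have h1 : coeff 1 (1 + 2 * X : PowerSeries ℂ) = 2 := by
      rw [map_add, two_X_eq, coeff_C_mul]
      simp
    rw [h1]
    push_cast
    ring

lemma coeff1_uinv_pow (n : ℕ) :
    coeff 1 (((1 + 2 * X : PowerSeries ℂ)⁻¹) ^ n) = -(2 * n) := by
  have h : ((1 + 2 * X : PowerSeries ℂ)) ^ n * ((1 + 2 * X)⁻¹) ^ n = 1 := by
    rw [← mul_pow, u_mul_inv, one_pow]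
  have h0 : constantCoeff (((1 + 2 * X : PowerSeries ℂ)⁻¹) ^ n) = 1 := by
    rw [map_pow, const_uinv, one_pow]
  have hc := congrArg (coeff 1) h
  rw [coeff_one_mul, const_u_pow, coeff1_u_pow, h0, one_mul, mul_one,
    coeff_one, if_neg one_ne_zero] at hc
  linear_combination hc

lemma coeff_sig_pow_self (n : ℕ) : coeff n (sig ^ n) = 1 := by
  rw [sig_def, mul_pow]
  have h := coeff_X_pow_mul (((1 + 2 * X : PowerSeries ℂ)⁻¹) ^ n) n 0
  rw [zero_add] at h
  rw [h, coeff_zero_eq_constantCoeff, map_pow, const_uinv, one_pow]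

lemma coeff_sig_pow_succ (n : ℕ) : coeff (n + 1) (sig ^ n) = -(2 * n) := by
  rw [sig_def, mul_pow]
  have h := coeff_X_pow_mul (((1 + 2 * X : PowerSeries ℂ)⁻¹) ^ n) n 1
  rw [show 1 + n = n + 1 by omega] at h
  rw [h, coeff1_uinv_pow]

end PsSubstAux

open PsSubstAux in
/-- If `F ∈ ℂ[[t]]` has constant coefficient `1` and satisfies
`F(t·(1+2t)⁻¹) = F(t)·(1 − t²)`, then `F(t)·F(−t)·(1 − t²) = 1`. -/
theorem unitarity_of_normalizing_series (F : PowerSeries ℂ)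
    (hF1 : PowerSeries.constantCoeff F = 1)
    (hF2 : psSubst (PowerSeries.X * (1 + 2 * PowerSeries.X)⁻¹) F
      = F * (1 - PowerSeries.X ^ 2)) :
    F * psSubst (-PowerSeries.X) F * (1 - PowerSeries.X ^ 2) = 1 := by
  set G : PowerSeries ℂ := F * rescale (-1 : ℂ) F * (1 - X ^ 2) with hG
  have E0 : psSubst sig F = F * (1 - X ^ 2) := by rw [sig_def]; exact hF2
  -- apply rescale (-1)
  have E1 : psSubst (-X * (1 - 2 * X)⁻¹) F = rescale (-1 : ℂ) F * (1 - X ^ 2) := by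
    have h := congrArg (rescale (-1 : ℂ)) E0
    rw [rescale_psSubst, rescale_sig, map_mul, map_sub, map_one, map_pow,
      rescale_neg_one_X, neg_sq] at h
    exact h
  -- apply psSubst sig
  have E2 : rescale (-1 : ℂ) F = psSubst (-sig) F * (1 - sig ^ 2) := by
    have h := congrArg (psSubst sig) E1
    rw [psSubst_comp const_sig const_rho, psSubst_sig_rho, psSubst_negX,
      psSubst_mul const_sig, psSubst_rescale_neg_one] at h
    rw [psSubst_sub, psSubst_one, psSubst_pow const_sig, psSubst_X const_sig] at h
    exact h
  -- G is fixed by substitution of sig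
  have E3 : psSubst sig G = G := by
    rw [hG, psSubst_mul const_sig, psSubst_mul const_sig, E0,
      psSubst_rescale_neg_one, psSubst_sub, psSubst_one,
      psSubst_pow const_sig, psSubst_X const_sig]
    calc F * (1 - X ^ 2) * psSubst (-sig) F * (1 - sig ^ 2)
        = F * (1 - X ^ 2) * (psSubst (-sig) F * (1 - sig ^ 2)) := by ring
      _ = F * (1 - X ^ 2) * rescale (-1 : ℂ) F := by rw [← E2]
      _ = F * rescale (-1 : ℂ) F * (1 - X ^ 2) := by ring
  -- induction: all positive coefficients of G vanish
  have key : ∀ n : ℕ, 1 ≤ n → coeff n G = 0 := by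
    intro n
    induction n using Nat.strong_induction_on with
    | _ n IH =>
      intro hn
      have hc := congrArg (coeff (n + 1)) E3
      rw [coeff_psSubst, Finset.sum_range_succ, Finset.sum_range_succ] at hc
      have hrest : ∑ k ∈ Finset.range n, coeff k G * coeff (n + 1) (sig ^ k) = 0 := by
        apply Finset.sum_eq_zero
        intro k hk
        rw [Finset.mem_range] at hk
        rcases Nat.eq_zero_or_pos k with rfl | hk1
        · rw [pow_zero, coeff_one, if_neg (by omega), mul_zero]
        · rw [IH k hk hk1, zero_mul]
      rw [hrest, zero_add, coeff_sig_pow_self, coeff_sig_pow_succ, mul_one] at hc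
      have h0 : coeff n G * -(2 * (n : ℂ)) = 0 := by linear_combination hc
      rcases mul_eq_zero.mp h0 with h | h
      · exact h
      · exfalso
        have hn' : (n : ℂ) ≠ 0 := Nat.cast_ne_zero.mpr (by omega)
        simp only [neg_eq_zero, mul_eq_zero] at h
        rcases h with h | h
        · exact two_ne_zero h
        · exact hn' h
  have hG0 : constantCoeff G = 1 := by
    rw [hG, map_mul, map_mul, hF1]
    have h1 : constantCoeff (rescale (-1 : ℂ) F) = 1 := by
      rw [← coeff_zero_eq_constantCoeff, coeff_rescale, pow_zero, one_mul,
        coeff_zero_eq_constantCoeff, hF1]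
    rw [h1]
    simp
  rw [psSubst_negX, ← hG]
  ext n
  rcases Nat.eq_zero_or_pos n with rfl | hn
  · rw [coeff_zero_eq_constantCoeff, hG0, map_one]
  · rw [key n hn, coeff_one, if_neg (by omega)]
end

section
/- Let F ∈ ℂ[[t]] be the unique formal power series with constant coefficient 1 satisfying F(t·(1+2t)⁻¹) = F(t)·(1 − t²). Then F(t)·F(−t·(1−2t)⁻¹) = 1 in ℂ[[t]], where F(−t·(1−2t)⁻¹) denotes substitution of the power series −t·(1−2t)⁻¹ (which has zero constant term) into F. -/
open PowerSeries

open Finset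

namespace CrossingAux

lemma coeff_psSubst (g F : PowerSeries ℂ) (n : ℕ) :
    coeff n (psSubst g F) = ∑ k ∈ range (n + 1), coeff k F * coeff n (g ^ k) := by
  simp [psSubst]

lemma coeff_pow_eq_zero {g : PowerSeries ℂ} (h0 : constantCoeff g = 0)
    {n k : ℕ} (h : n < k) : coeff n (g ^ k) = 0 := by
  have hd : (X : PowerSeries ℂ) ^ k ∣ g ^ k :=
    pow_dvd_pow_of_dvd (PowerSeries.X_dvd_iff.2 h0) k
  exact PowerSeries.X_pow_dvd_iff.1 hd n h

lemma coeff_psSubst_le {g : PowerSeries ℂ} (h0 : constantCoeff g = 0)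
    (F : PowerSeries ℂ) {m N : ℕ} (h : m ≤ N) :
    coeff m (psSubst g F) = ∑ k ∈ range (N + 1), coeff k F * coeff m (g ^ k) := by
  rw [coeff_psSubst]
  refine Finset.sum_subset ?_ ?_
  · exact Finset.range_subset_range.2 (by omega)
  · intro k _ hk
    have : m < k := by simp only [Finset.mem_range] at hk ⊢; omega
    rw [coeff_pow_eq_zero h0 this, mul_zero]

lemma coeff_psSubst_eval₂ {g : PowerSeries ℂ} (h0 : constantCoeff g = 0)
    (F : PowerSeries ℂ) {m N : ℕ} (h : m ≤ N) :
    coeff m (psSubst g F)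
      = coeff m (Polynomial.eval₂ (C (R := ℂ)) g (trunc (N + 1) F)) := by
  rw [Polynomial.eval₂_eq_sum_range' (C (R := ℂ)) (natDegree_trunc_lt F N) g, map_sum,
    coeff_psSubst_le h0 F h]
  refine Finset.sum_congr rfl fun k hk => ?_
  rw [coeff_C_mul, PowerSeries.coeff_trunc, if_pos (Finset.mem_range.1 hk)]

lemma coeff_eval₂_congr {g : PowerSeries ℂ} (h0 : constantCoeff g = 0)
    {P Q : Polynomial ℂ} {n : ℕ} (hPQ : ∀ i ≤ n, P.coeff i = Q.coeff i) :
    coeff n (Polynomial.eval₂ (C (R := ℂ)) g P) = coeff n (Polynomial.eval₂ (C (R := ℂ)) g Q) := by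
  set N := max P.natDegree Q.natDegree + 1 with hN
  rw [Polynomial.eval₂_eq_sum_range' (C (R := ℂ)) (by omega : P.natDegree < N) g,
    Polynomial.eval₂_eq_sum_range' (C (R := ℂ)) (by omega : Q.natDegree < N) g,
    map_sum, map_sum]
  refine Finset.sum_congr rfl fun i _ => ?_
  rw [coeff_C_mul, coeff_C_mul]
  rcases le_or_gt i n with hi | hi
  · rw [hPQ i hi]
  · rw [coeff_pow_eq_zero h0 hi, mul_zero, mul_zero]

lemma psSubst_mul {g : PowerSeries ℂ} (h0 : constantCoeff g = 0)
    (A B : PowerSeries ℂ) : psSubst g (A * B) = psSubst g A * psSubst g B := by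
  ext n
  rw [PowerSeries.coeff_mul]
  have : ∀ p ∈ HasAntidiagonal.antidiagonal n,
      coeff p.1 (psSubst g A) * coeff p.2 (psSubst g B)
        = coeff p.1 (Polynomial.eval₂ (C (R := ℂ)) g (trunc (n + 1) A))
          * coeff p.2 (Polynomial.eval₂ (C (R := ℂ)) g (trunc (n + 1) B)) := by
    intro p hp
    have h1 : p.1 ≤ n := Finset.HasAntidiagonal.antidiagonal.fst_le hp
    have h2 : p.2 ≤ n := Finset.HasAntidiagonal.antidiagonal.snd_le hp
    rw [coeff_psSubst_eval₂ h0 A h1, coeff_psSubst_eval₂ h0 B h2]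
  rw [Finset.sum_congr rfl this, ← PowerSeries.coeff_mul, ← Polynomial.eval₂_mul,
    coeff_psSubst_eval₂ h0 (A * B) (le_refl n)]
  refine coeff_eval₂_congr h0 fun i hi => ?_
  rw [PowerSeries.coeff_trunc, if_pos (by omega)]
  have := PowerSeries.coeff_mul_eq_coeff_trunc_mul_trunc (R := ℂ) A B
    (show i < n + 1 by omega)
  rw [this, ← Polynomial.coe_mul, Polynomial.coeff_coe]

lemma psSubst_one (g : PowerSeries ℂ) : psSubst g 1 = 1 := by
  ext n
  rw [coeff_psSubst]
  rw [Finset.sum_eq_single 0]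
  · simp
  · intro k _ hk
    rw [PowerSeries.coeff_one, if_neg hk, zero_mul]
  · simp

lemma psSubst_add (g A B : PowerSeries ℂ) :
    psSubst g (A + B) = psSubst g A + psSubst g B := by
  ext n
  simp [coeff_psSubst, add_mul, Finset.sum_add_distrib]

/-- `psSubst g` as a ring homomorphism. -/
noncomputable def substHom (g : PowerSeries ℂ) (h0 : constantCoeff g = 0) :
    PowerSeries ℂ →+* PowerSeries ℂ where
  toFun := psSubst g
  map_one' := psSubst_one g
  map_mul' := psSubst_mul h0
  map_zero' := by ext n; simp [coeff_psSubst]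
  map_add' := psSubst_add g

@[simp] lemma substHom_apply (g : PowerSeries ℂ) (h0 : constantCoeff g = 0)
    (F : PowerSeries ℂ) : substHom g h0 F = psSubst g F := rfl

lemma constantCoeff_psSubst (g F : PowerSeries ℂ) :
    constantCoeff (psSubst g F) = constantCoeff F := by
  rw [← coeff_zero_eq_constantCoeff, coeff_psSubst]
  simp

lemma psSubst_X {g : PowerSeries ℂ} (h0 : constantCoeff g = 0) :
    psSubst g X = g := by
  ext n
  rw [coeff_psSubst, Finset.sum_eq_single 1]
  · simp
  · intro k _ hk
    rw [PowerSeries.coeff_X, if_neg hk, zero_mul]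
  · intro h1
    cases n with
    | zero => simpa using h0
    | succ m => exact absurd (by simp : 1 ∈ range (m + 1 + 1)) h1

lemma psSubst_inv {g : PowerSeries ℂ} (h0 : constantCoeff g = 0)
    {A : PowerSeries ℂ} (hA : constantCoeff A ≠ 0) :
    psSubst g A⁻¹ = (psSubst g A)⁻¹ := by
  have hcc : constantCoeff (psSubst g A) ≠ 0 := by
    rwa [constantCoeff_psSubst]
  rw [PowerSeries.eq_inv_iff_mul_eq_one hcc, mul_comm, ← psSubst_mul h0,
    PowerSeries.mul_inv_cancel A hA, psSubst_one]

lemma psSubst_psSubst {g h : PowerSeries ℂ} (hg : constantCoeff g = 0)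
    (hh : constantCoeff h = 0) (F : PowerSeries ℂ) :
    psSubst g (psSubst h F) = psSubst (psSubst g h) F := by
  ext n
  rw [coeff_psSubst, coeff_psSubst]
  have step1 : ∀ k ∈ range (n + 1),
      coeff k (psSubst h F) * coeff n (g ^ k)
        = ∑ m ∈ range (n + 1), coeff m F * coeff k (h ^ m) * coeff n (g ^ k) := by
    intro k hk
    rw [coeff_psSubst_le hh F (by have := Finset.mem_range.1 hk; omega : k ≤ n), Finset.sum_mul]
  rw [Finset.sum_congr rfl step1, Finset.sum_comm]
  refine Finset.sum_congr rfl fun m _ => ?_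
  have : (psSubst g h) ^ m = psSubst g (h ^ m) := by
    rw [← substHom_apply g hg h, ← map_pow, substHom_apply]
  rw [this, coeff_psSubst, Finset.mul_sum]
  exact Finset.sum_congr rfl fun k _ => (mul_assoc _ _ _)

/-- Abbreviation for `(1+2X)⁻¹`. -/
noncomputable def u : PowerSeries ℂ := (1 + 2 * X)⁻¹

lemma cc_one_add_two_X : constantCoeff (R := ℂ) (1 + 2 * X) = 1 := by simp

lemma hu_mul : (1 + 2 * X) * u = 1 :=
  PowerSeries.mul_inv_cancel _ (by rw [cc_one_add_two_X]; exact one_ne_zero)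

lemma cc_u : constantCoeff u = 1 := by
  rw [u, PowerSeries.constantCoeff_inv, cc_one_add_two_X, inv_one]

lemma u_eq : u = 1 - 2 * (X * u) := by
  have h := hu_mul
  linear_combination h

lemma coeff_one_u : coeff 1 u = -2 := by
  have h2 : (2 : PowerSeries ℂ) * (X * u) = X * u + X * u := two_mul _
  rw [u_eq, map_sub, h2, map_add]
  simp [PowerSeries.coeff_succ_X_mul, coeff_zero_eq_constantCoeff, cc_u]
  norm_num

lemma cc_u_pow (m : ℕ) : constantCoeff (u ^ m) = 1 := by
  rw [map_pow, cc_u, one_pow]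

lemma coeff_one_u_pow (m : ℕ) : coeff 1 (u ^ m) = -2 * m := by
  induction m with
  | zero => simp
  | succ m ih =>
    rw [pow_succ, PowerSeries.coeff_mul, Finset.Nat.sum_antidiagonal_eq_sum_range_succ_mk,
      Finset.sum_range_succ, Finset.sum_range_one]
    simp only [Nat.sub_zero, Nat.sub_self]
    simp only [coeff_zero_eq_constantCoeff]
    rw [ih, coeff_one_u, cc_u, cc_u_pow]
    push_cast
    ring

lemma coeff_tau_pow_self (n : ℕ) : coeff n ((X * u) ^ n) = 1 := by
  have : coeff (0 + n) ((X : PowerSeries ℂ) ^ n * u ^ n) = coeff 0 (u ^ n) :=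
    PowerSeries.coeff_X_pow_mul _ _ _
  rw [mul_pow]
  simpa [coeff_zero_eq_constantCoeff, cc_u_pow] using this

lemma coeff_succ_tau_pow (m : ℕ) : coeff (R := ℂ) (m + 1) ((X * u) ^ m) = -2 * m := by
  have : coeff (1 + m) ((X : PowerSeries ℂ) ^ m * u ^ m) = coeff 1 (u ^ m) :=
    PowerSeries.coeff_X_pow_mul _ _ _
  rw [mul_pow, show m + 1 = 1 + m from by omega, this, coeff_one_u_pow]

lemma cc_tau : constantCoeff (X * u) = 0 := by simp

lemma unique_solution (F H : PowerSeries ℂ)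
    (hF1 : constantCoeff F = 1) (hH1 : constantCoeff H = 1)
    (hF2 : psSubst (X * u) F = F * (1 - X ^ 2))
    (hH2 : psSubst (X * u) H = H * (1 - X ^ 2)) : F = H := by
  have hD : psSubst (X * u) (F - H) = (F - H) * (1 - X ^ 2) := by
    have h := (substHom (X * u) cc_tau).map_sub F H
    simp only [substHom_apply] at h
    rw [h, hF2, hH2]
    ring
  suffices hall : ∀ m, coeff m (F - H) = 0 by
    have hz : F - H = 0 := PowerSeries.ext fun n => by rw [hall n, map_zero]
    exact sub_eq_zero.mp hz
  intro m
  induction m using Nat.strong_induction_on with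
  | _ m IH =>
    rcases Nat.eq_zero_or_pos m with hm | hm
    · subst hm
      simp [coeff_zero_eq_constantCoeff, hF1, hH1]
    · obtain ⟨m', rfl⟩ : ∃ m', m = m' + 1 := ⟨m - 1, by omega⟩
      have heq := congrArg (coeff (m' + 2)) hD
      rw [coeff_psSubst, show m' + 2 + 1 = (m' + 1) + 1 + 1 from rfl,
        Finset.sum_range_succ, Finset.sum_range_succ] at heq
      have hz : ∑ k ∈ range (m' + 1), coeff k (F - H) * coeff (m' + 2) ((X * u) ^ k)
          = 0 :=
        Finset.sum_eq_zero fun k hk => by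
          rw [IH k (by have := Finset.mem_range.1 hk; omega), zero_mul]
      have hRHS : coeff (m' + 2) ((F - H) * (1 - X ^ 2))
          = coeff (m' + 2) (F - H) - coeff m' (F - H) := by
        have hr : (F - H) * (1 - X ^ 2) = (F - H) - X ^ 2 * (F - H) := by ring
        rw [hr, map_sub, PowerSeries.coeff_X_pow_mul]
      rw [hz, hRHS, IH m' (by omega), coeff_succ_tau_pow (m' + 1),
        show m' + 1 + 1 = m' + 2 from rfl, coeff_tau_pow_self (m' + 2)] at heq
      have h2 : coeff (m' + 1) (F - H) * (-2 * (↑(m' + 1) : ℂ)) = 0 := by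
        linear_combination heq
      have h3 : (-2 * (↑(m' + 1) : ℂ)) ≠ 0 :=
        mul_ne_zero (by norm_num) (Nat.cast_ne_zero.2 m'.succ_ne_zero)
      exact (mul_eq_zero.1 h2).resolve_right h3

lemma u_def : u = (1 + 2 * X)⁻¹ := rfl

lemma psSubst_one_add_two_X {g : PowerSeries ℂ} (h0 : constantCoeff g = 0) :
    psSubst g (1 + 2 * X) = 1 + 2 * g := by
  have : psSubst g (1 + 2 * X) = substHom g h0 (1 + 2 * X) := rfl
  rw [this, map_add, map_one, map_mul, map_ofNat, substHom_apply, psSubst_X h0]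

lemma psSubst_one_sub_two_X {g : PowerSeries ℂ} (h0 : constantCoeff g = 0) :
    psSubst g (1 - 2 * X) = 1 - 2 * g := by
  have : psSubst g (1 - 2 * X) = substHom g h0 (1 - 2 * X) := rfl
  rw [this, map_sub, map_one, map_mul, map_ofNat, substHom_apply, psSubst_X h0]

lemma psSubst_one_sub_X_sq {g : PowerSeries ℂ} (h0 : constantCoeff g = 0) :
    psSubst g (1 - X ^ 2) = 1 - g ^ 2 := by
  have : psSubst g (1 - X ^ 2) = substHom g h0 (1 - X ^ 2) := rfl
  rw [this, map_sub, map_one, map_pow, substHom_apply, psSubst_X h0]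

lemma cc_one_sub_two_X : constantCoeff (R := ℂ) (1 - 2 * X) = 1 := by simp

lemma one_sub_two_tau : (1 : PowerSeries ℂ) - 2 * (X * u) = (1 + 2 * X)⁻¹ := by
  rw [PowerSeries.eq_inv_iff_mul_eq_one (by rw [cc_one_add_two_X]; exact one_ne_zero)]
  linear_combination (-2 * (X : PowerSeries ℂ)) * hu_mul

lemma u_inv : u⁻¹ = 1 + 2 * X := by
  symm
  rw [PowerSeries.eq_inv_iff_mul_eq_one (by rw [cc_u]; exact one_ne_zero)]
  exact hu_mul

lemma tau_sigma : psSubst (X * (1 + 2 * X)⁻¹) (-X * (1 - 2 * X)⁻¹) = -X := by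
  rw [show ((1 + 2 * X : PowerSeries ℂ))⁻¹ = u from rfl]
  have hτ0 : constantCoeff (X * u) = 0 := cc_tau
  rw [psSubst_mul hτ0, psSubst_inv hτ0 (by rw [cc_one_sub_two_X]; exact one_ne_zero),
    psSubst_one_sub_two_X hτ0]
  have hneg : psSubst (X * u) (-X) = -(X * u) := by
    have : psSubst (X * u) (-X) = substHom (X * u) hτ0 (-X) := rfl
    rw [this, map_neg, substHom_apply, psSubst_X hτ0]
  rw [hneg, one_sub_two_tau, ← u_def, u_inv]
  linear_combination (-(X : PowerSeries ℂ)) * hu_mul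

end CrossingAux

open CrossingAux in
/-- If `F ∈ ℂ[[t]]` has constant coefficient `1` and satisfies
`F(t·(1+2t)⁻¹) = F(t)·(1 − t²)`, then `F(t)·F(−t·(1−2t)⁻¹) = 1`. -/
theorem crossing_of_normalizing_series (F : PowerSeries ℂ)
    (hF1 : PowerSeries.constantCoeff F = 1)
    (hF2 : psSubst (PowerSeries.X * (1 + 2 * PowerSeries.X)⁻¹) F
      = F * (1 - PowerSeries.X ^ 2)) :
    F * psSubst (-PowerSeries.X * (1 - 2 * PowerSeries.X)⁻¹) F = 1 := by
  have hnX0 : constantCoeff (-X : PowerSeries ℂ) = 0 := by simp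
  have hτ0 : constantCoeff (X * (1 + 2 * X)⁻¹ : PowerSeries ℂ) = 0 := by simp
  have hσ0 : constantCoeff (-X * (1 - 2 * X)⁻¹ : PowerSeries ℂ) = 0 := by simp
  -- Step 1: F ∘ σ = (F ∘ (-X)) * (1 - X²)
  have e1 : psSubst (-X) (X * (1 + 2 * X)⁻¹ : PowerSeries ℂ) = -X * (1 - 2 * X)⁻¹ := by
    rw [psSubst_mul hnX0, psSubst_X hnX0,
      psSubst_inv hnX0 (by rw [cc_one_add_two_X]; exact one_ne_zero),
      psSubst_one_add_two_X hnX0]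
    ring_nf
  have e2 : psSubst (-X) (F * (1 - X ^ 2)) = psSubst (-X) F * (1 - X ^ 2) := by
    rw [psSubst_mul hnX0, psSubst_one_sub_X_sq hnX0, neg_sq]
  have hstar : psSubst (-X * (1 - 2 * X)⁻¹) F = psSubst (-X) F * (1 - X ^ 2) := by
    have h := congrArg (psSubst (-X)) hF2
    rw [psSubst_psSubst hnX0 hτ0 F, e1, e2] at h
    exact h
  set G := psSubst (-X * (1 - 2 * X)⁻¹) F with hG
  have hccG : constantCoeff G = 1 := by rw [hG, constantCoeff_psSubst, hF1]
  have hccG' : constantCoeff G ≠ 0 := by rw [hccG]; exact one_ne_zero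
  have hccNXF : constantCoeff (psSubst (-X) F) ≠ 0 := by
    rw [constantCoeff_psSubst, hF1]; exact one_ne_zero
  have hx2 : constantCoeff (1 - X ^ 2 : PowerSeries ℂ) ≠ 0 := by simp
  -- Step 2: G⁻¹ satisfies the functional equation
  have hH1 : constantCoeff (G⁻¹) = 1 := by
    rw [PowerSeries.constantCoeff_inv, hccG, inv_one]
  have hH2 : psSubst (X * (1 + 2 * X)⁻¹) (G⁻¹) = G⁻¹ * (1 - X ^ 2) := by
    rw [psSubst_inv hτ0 hccG', hG, psSubst_psSubst hτ0 hσ0, tau_sigma, ← hG, hstar,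
      PowerSeries.mul_inv_rev, mul_comm ((1 - X ^ 2 : PowerSeries ℂ)⁻¹) _, mul_assoc,
      PowerSeries.inv_mul_cancel _ hx2, mul_one]
  -- Step 3: uniqueness
  have hFu : psSubst (X * u) F = F * (1 - X ^ 2) := hF2
  have hHu : psSubst (X * u) (G⁻¹) = G⁻¹ * (1 - X ^ 2) := hH2
  have hFH : F = G⁻¹ := unique_solution F (G⁻¹) hF1 hH1 hFu hHu
  rw [hFH]
  exact PowerSeries.inv_mul_cancel G hccG'
end

section
/- Let F ∈ ℂ[[t]] be the unique formal power series with constant coefficient 1 satisfying F(t·(1+2t)⁻¹) = F(t)·(1 − t²), and let P be the 4×4 permutation matrix over ℂ[[t]] representing the flip of ℂ² ⊗ ℂ² in the standard basis e_i ⊗ e_j (i.e. P(e_i ⊗ e_j) = e_j ⊗ e_i). Define R̄₊ = F(t)·(1 − t·P) and R̄₋ = F(−t)·(1 + t·P) in the ring of 4×4 matrices over ℂ[[t]], where F(−t) denotes substitution of −t into F. Then R̄₊ · R̄₋ = 1 (the identity matrix). -/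
open PowerSeries

namespace RmatrixAux

lemma coeff_pow_zero_of_lt {g : PowerSeries ℂ} (hg : constantCoeff g = 0)
    {n k : ℕ} (h : n < k) : coeff n (g ^ k) = 0 := by
  obtain ⟨w, hw⟩ : (X : PowerSeries ℂ) ∣ g := PowerSeries.X_dvd_iff.mpr hg
  have : g ^ k = X ^ k * w ^ k := by rw [hw, mul_pow]
  rw [this, PowerSeries.coeff_X_pow_mul']
  simp [not_le.mpr h]

lemma coeff_psSubst (g F : PowerSeries ℂ) (n : ℕ) :
    coeff n (psSubst g F) =
      ∑ k ∈ Finset.range (n + 1), coeff k F * coeff n (g ^ k) := by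
  simp [psSubst]

lemma coeff_aeval {g : PowerSeries ℂ} (hg : constantCoeff g = 0) (p : Polynomial ℂ) (n : ℕ) :
    coeff n (Polynomial.aeval g p) =
      ∑ k ∈ Finset.range (n + 1), p.coeff k * coeff n (g ^ k) := by
  set N := max (p.natDegree + 1) (n + 1) with hN
  rw [Polynomial.aeval_eq_sum_range' (lt_of_lt_of_le (Nat.lt_succ_self _) (le_max_left _ _))]
  rw [map_sum]
  have h1 : ∀ k ∈ Finset.range N, coeff n (p.coeff k • g ^ k) = p.coeff k * coeff n (g ^ k) := by
    intro k _; simp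
  rw [Finset.sum_congr rfl h1]
  refine (Finset.sum_subset (Finset.range_subset_range.mpr (le_max_right _ _)) ?_).symm
  intro k hk hk'
  have : n < k := by
    simp only [Finset.mem_range, not_lt] at hk'
    omega
  rw [coeff_pow_zero_of_lt hg this, mul_zero]

lemma coeff_psSubst_aeval {g : PowerSeries ℂ} (hg : constantCoeff g = 0)
    (F : PowerSeries ℂ) {n N : ℕ} (hn : n < N) :
    coeff n (psSubst g F) = coeff n (Polynomial.aeval g (trunc N F)) := by
  rw [coeff_aeval hg, coeff_psSubst]
  refine Finset.sum_congr rfl fun k hk => ?_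
  rw [coeff_trunc]
  have : k < N := lt_of_lt_of_le (Finset.mem_range.mp hk) hn
  rw [if_pos this]

lemma psSubst_mul {g : PowerSeries ℂ} (hg : constantCoeff g = 0) (A B : PowerSeries ℂ) :
    psSubst g (A * B) = psSubst g A * psSubst g B := by
  ext n
  rw [coeff_psSubst_aeval hg (A * B) (Nat.lt_succ_self n)]
  have step : coeff n (Polynomial.aeval g (trunc (n+1) (A * B)))
      = coeff n (Polynomial.aeval g (trunc (n+1) A * trunc (n+1) B)) := by
    rw [coeff_aeval hg, coeff_aeval hg]
    refine Finset.sum_congr rfl fun k hk => ?_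
    have hkn : k < n + 1 := Finset.mem_range.mp hk
    congr 1
    rw [coeff_trunc, if_pos hkn, Polynomial.coeff_mul, PowerSeries.coeff_mul]
    refine Finset.sum_congr rfl fun p hp => ?_
    have hp' := Finset.HasAntidiagonal.mem_antidiagonal.mp hp
    rw [coeff_trunc, coeff_trunc, if_pos (by omega), if_pos (by omega)]
  rw [step, map_mul, PowerSeries.coeff_mul, PowerSeries.coeff_mul]
  refine Finset.sum_congr rfl fun p hp => ?_
  have hp' := Finset.HasAntidiagonal.mem_antidiagonal.mp hp
  rw [← coeff_psSubst_aeval hg A (by omega : p.1 < n+1),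
      ← coeff_psSubst_aeval hg B (by omega : p.2 < n+1)]

lemma psSubst_one (g : PowerSeries ℂ) : psSubst g 1 = 1 := by
  ext n
  rw [coeff_psSubst]
  rw [Finset.sum_eq_single 0]
  · simp
  · intro k _ hk
    simp [PowerSeries.coeff_one, hk]
  · simp

lemma psSubst_pow {g h : PowerSeries ℂ} (hg : constantCoeff g = 0) (j : ℕ) :
    psSubst g (h ^ j) = (psSubst g h) ^ j := by
  induction j with
  | zero => simpa using psSubst_one g
  | succ j ih => rw [pow_succ, psSubst_mul hg, ih, pow_succ]

lemma psSubst_comp {g h : PowerSeries ℂ} (hg : constantCoeff g = 0)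
    (hh : constantCoeff h = 0) (F : PowerSeries ℂ) :
    psSubst h (psSubst g F) = psSubst (psSubst h g) F := by
  ext n
  rw [coeff_psSubst, coeff_psSubst]
  have key : ∀ k ∈ Finset.range (n+1),
      coeff k (psSubst g F) * coeff n (h ^ k)
      = ∑ j ∈ Finset.range (n+1), coeff j F * (coeff k (g ^ j) * coeff n (h ^ k)) := by
    intro k hk
    have hk' := Finset.mem_range.mp hk
    rw [coeff_psSubst, Finset.sum_mul]
    rw [Finset.sum_subset (Finset.range_subset_range.mpr (by omega : k + 1 ≤ n + 1))
      (fun j _ hj => by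
        have hkj : k < j := by simp only [Finset.mem_range, not_lt] at hj; omega
        rw [coeff_pow_zero_of_lt hg hkj, mul_zero, zero_mul])]
    exact Finset.sum_congr rfl fun j _ => by ring
  rw [Finset.sum_congr rfl key, Finset.sum_comm]
  refine Finset.sum_congr rfl fun j _ => ?_
  rw [← Finset.mul_sum]
  congr 1
  rw [← psSubst_pow hh, coeff_psSubst]

lemma psSubst_add (g A B : PowerSeries ℂ) :
    psSubst g (A + B) = psSubst g A + psSubst g B := by
  ext n
  simp only [map_add, coeff_psSubst, add_mul, Finset.sum_add_distrib]

lemma psSubst_neg (g A : PowerSeries ℂ) : psSubst g (-A) = -psSubst g A := by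
  ext n
  simp only [map_neg, coeff_psSubst, neg_mul, Finset.sum_neg_distrib]

lemma psSubst_sub (g A B : PowerSeries ℂ) :
    psSubst g (A - B) = psSubst g A - psSubst g B := by
  rw [sub_eq_add_neg, psSubst_add, psSubst_neg, sub_eq_add_neg]

lemma psSubst_C (g : PowerSeries ℂ) (c : ℂ) : psSubst g (C c) = C c := by
  ext n
  rw [coeff_psSubst, Finset.sum_eq_single 0]
  · simp [PowerSeries.coeff_C]
  · intro k _ hk; simp [PowerSeries.coeff_C, hk]
  · simp

lemma psSubst_X {g : PowerSeries ℂ} (hg : constantCoeff g = 0) : psSubst g X = g := by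
  ext n
  rw [coeff_psSubst]
  cases n with
  | zero =>
    simp only [Finset.range_one, Finset.sum_singleton, PowerSeries.coeff_X]
    simpa using hg.symm
  | succ m =>
    rw [Finset.sum_eq_single 1]
    · simp
    · intro k _ hk; simp [PowerSeries.coeff_X, hk]
    · intro h
      exact absurd (Finset.mem_range.mpr (by omega)) h

lemma constantCoeff_psSubst (g F : PowerSeries ℂ) :
    constantCoeff (psSubst g F) = constantCoeff F := by
  have h0 := coeff_psSubst g F 0
  simp only [PowerSeries.coeff_zero_eq_constantCoeff] at h0
  simpa using h0

/-! ### The particular series `g = X (1+2X)⁻¹` -/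

noncomputable abbrev uu : PowerSeries ℂ := (1 + 2 * X)⁻¹
noncomputable abbrev gg : PowerSeries ℂ := X * uu

lemma cc_onetwo : constantCoeff (1 + 2 * X : PowerSeries ℂ) = 1 := by simp

lemma hu : (1 + 2 * X : PowerSeries ℂ) * uu = 1 :=
  PowerSeries.mul_inv_cancel _ (by rw [cc_onetwo]; exact one_ne_zero)

lemma cc_uu : constantCoeff uu = 1 := by
  have := congrArg (constantCoeff (R := ℂ)) hu
  simpa [cc_onetwo] using this

lemma cc_gg : constantCoeff gg = 0 := by simp

lemma uu_eq : uu = 1 - 2 * (X * uu) := by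
  have := hu
  ring_nf at this ⊢
  linear_combination this

lemma cc_uu_pow (k : ℕ) : constantCoeff (uu ^ k) = 1 := by
  rw [map_pow, cc_uu, one_pow]

lemma coeff_one_uu : coeff 1 uu = -2 := by
  conv_lhs => rw [uu_eq]
  have h2 : (2 : PowerSeries ℂ) = C 2 := (map_ofNat (C (R := ℂ)) 2).symm
  rw [map_sub, h2, PowerSeries.coeff_C_mul]
  simp [PowerSeries.coeff_succ_X_mul, cc_uu]

lemma coeff_one_uu_pow (k : ℕ) : coeff 1 (uu ^ k) = -2 * k := by
  induction k with
  | zero => simp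
  | succ k ih =>
    rw [pow_succ', PowerSeries.coeff_mul]
    simp only [Finset.Nat.antidiagonal_succ, Finset.sum_cons, Finset.sum_map,
      Finset.Nat.antidiagonal_zero, Finset.sum_singleton]
    simp only [Function.Embedding.coeFn_mk, Function.Embedding.coe_prodMap,
      Function.Embedding.refl_apply]
    norm_num [ih, coeff_one_uu, cc_uu, cc_uu_pow]
    ring

lemma coeff_gg_pow_self (k : ℕ) : coeff k (gg ^ k) = 1 := by
  have h : gg ^ k = X ^ k * uu ^ k := by rw [mul_pow]
  have h2 := PowerSeries.coeff_X_pow_mul (uu ^ k) k 0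
  rw [zero_add] at h2
  rw [h, h2]
  simp [cc_uu]

lemma coeff_gg_pow_succ (k : ℕ) : coeff (k + 1) (gg ^ k) = -2 * k := by
  have h : gg ^ k = X ^ k * uu ^ k := by rw [mul_pow]
  have h2 := PowerSeries.coeff_X_pow_mul (uu ^ k) k 1
  rw [add_comm 1 k] at h2
  rw [h, h2, coeff_one_uu_pow]

/-- Rigidity: a series fixed by substitution of `gg` has vanishing positive coefficients. -/
lemma rigid {G : PowerSeries ℂ} (hfix : psSubst gg G = G) :
    ∀ n, 0 < n → coeff n G = 0 := by
  intro n
  induction n using Nat.strong_induction_on with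
  | _ n ih =>
    intro hn
    have h := congrArg (coeff (n + 1)) hfix
    rw [coeff_psSubst, Finset.sum_range_succ, Finset.sum_range_succ,
      coeff_gg_pow_self, coeff_gg_pow_succ] at h
    have hz : ∑ k ∈ Finset.range n, coeff k G * coeff (n + 1) (gg ^ k) = 0 := by
      refine Finset.sum_eq_zero fun k hk => ?_
      rcases Nat.eq_zero_or_pos k with h0 | hpos
      · subst h0; simp
      · rw [ih k (Finset.mem_range.mp hk) hpos, zero_mul]
    rw [hz, zero_add, mul_one] at h
    have h2 : coeff n G * (-2 * n) = 0 := by linear_combination h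
    have hne : (-2 * (n : ℂ)) ≠ 0 := by
      have : (n : ℂ) ≠ 0 := Nat.cast_ne_zero.mpr hn.ne'
      simpa using this
    exact (mul_eq_zero.mp h2).resolve_right hne

/-- The scalar unitarity identity. -/
lemma scalar_core (F : PowerSeries ℂ) (hF1 : constantCoeff F = 1)
    (hF2 : psSubst (X * (1 + 2 * X)⁻¹) F = F * (1 - X ^ 2)) :
    F * psSubst (-X) F * (1 - X ^ 2) = 1 := by
  set hh : PowerSeries ℂ := -gg with hhh
  have cc_hh : constantCoeff hh = 0 := by rw [hhh, map_neg, cc_gg, neg_zero]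
  have cc_negX : constantCoeff (-X : PowerSeries ℂ) = 0 := by simp
  have hF2' : psSubst gg F = F * (1 - X ^ 2) := hF2
  -- psSubst hh uu is the inverse of uu
  have h2C : (2 : PowerSeries ℂ) = C 2 := (map_ofNat (C (R := ℂ)) 2).symm
  have h12 : psSubst hh (1 + 2 * X) = 1 + 2 * hh := by
    rw [psSubst_add, psSubst_one, h2C, psSubst_mul cc_hh, psSubst_C, psSubst_X cc_hh, ← h2C]
  have huv : uu * psSubst hh uu = 1 := by
    have := congrArg (psSubst hh) hu
    rw [psSubst_mul cc_hh, psSubst_one, h12] at this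
    have h1 : (1 : PowerSeries ℂ) + 2 * hh = uu := by
      rw [hhh]
      have := uu_eq
      linear_combination -this
    rwa [h1] at this
  -- composition of gg with hh is -X
  have hcomp1 : psSubst hh gg = -X := by
    rw [psSubst_mul cc_hh, psSubst_X cc_hh]
    linear_combination (-(X : PowerSeries ℂ)) * huv
  -- Step A : substituting hh into hF2'
  have stepA : psSubst (-X) F = psSubst hh F * (1 - hh ^ 2) := by
    have := congrArg (psSubst hh) hF2'
    rw [psSubst_comp cc_gg cc_hh, hcomp1] at this
    rw [this, psSubst_mul cc_hh, psSubst_sub, psSubst_one, psSubst_pow cc_hh,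
      psSubst_X cc_hh]
  have hsq : hh ^ 2 = gg ^ 2 := by rw [hhh, neg_pow]; ring
  -- key2 : psSubst gg (psSubst (-X) F) = psSubst hh F
  have key2 : psSubst gg (psSubst (-X) F) = psSubst hh F := by
    rw [psSubst_comp cc_negX cc_gg, psSubst_neg, psSubst_X cc_gg]
  -- the series G
  set G : PowerSeries ℂ := F * psSubst (-X) F * (1 - X ^ 2) with hG
  have hGfix : psSubst gg G = G := by
    rw [hG, psSubst_mul cc_gg, psSubst_mul cc_gg, hF2', key2,
      psSubst_sub, psSubst_one, psSubst_pow cc_gg, psSubst_X cc_gg]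
    rw [stepA, hsq]
    ring
  have ccG : constantCoeff G = 1 := by
    rw [hG, map_mul, map_mul, hF1, constantCoeff_psSubst, hF1]
    simp
  have : G = 1 := by
    ext n
    cases n with
    | zero =>
      rw [PowerSeries.coeff_zero_eq_constantCoeff, ccG]
      simp
    | succ m =>
      rw [rigid hGfix (m + 1) (Nat.succ_pos m)]
      simp
  exact this

end RmatrixAux

/-- Let `F ∈ ℂ[[t]]` have constant coefficient `1` and satisfy
`F(t·(1+2t)⁻¹) = F(t)·(1 − t²)`, and let `P` be the `4×4` permutation matrix (rows and
columns indexed by pairs `(i,j)` of indices of the standard basis `e_i ⊗ e_j` of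
`ℂ² ⊗ ℂ²`) representing the flip `e_k ⊗ e_l ↦ e_l ⊗ e_k`, i.e.
`P (i,j) (k,l) = δ_{i l} δ_{j k}`. Then
`(F(t)·(1 − t·P)) · (F(−t)·(1 + t·P)) = 1`. -/
theorem normalized_R_matrix_unitarity (F : PowerSeries ℂ)
    (hF1 : PowerSeries.constantCoeff F = 1)
    (hF2 : psSubst (PowerSeries.X * (1 + 2 * PowerSeries.X)⁻¹) F
      = F * (1 - PowerSeries.X ^ 2))
    (P : Matrix (Fin 2 × Fin 2) (Fin 2 × Fin 2) (PowerSeries ℂ))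
    (hP : ∀ i j k l : Fin 2, P (i, j) (k, l) = if i = l ∧ j = k then 1 else 0) :
    (F • ((1 : Matrix (Fin 2 × Fin 2) (Fin 2 × Fin 2) (PowerSeries ℂ))
        - (PowerSeries.X : PowerSeries ℂ) • P)) *
      ((psSubst (-PowerSeries.X) F : PowerSeries ℂ) •
        ((1 : Matrix (Fin 2 × Fin 2) (Fin 2 × Fin 2) (PowerSeries ℂ))
          + (PowerSeries.X : PowerSeries ℂ) • P)) = 1 := by
  have hPP : P * P = 1 := by
    ext ⟨i, j⟩ ⟨k, l⟩
    rw [Matrix.mul_apply]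
    rw [Fintype.sum_prod_type]
    fin_cases i <;> fin_cases j <;> fin_cases k <;> fin_cases l <;>
      simp [hP, Fin.sum_univ_succ, Matrix.one_apply, Prod.ext_iff]
  have key := RmatrixAux.scalar_core F hF1 hF2
  set Fm := psSubst (-PowerSeries.X) F with hFm
  have hXP : ((PowerSeries.X : PowerSeries ℂ) • P) * ((PowerSeries.X : PowerSeries ℂ) • P)
      = (PowerSeries.X ^ 2 : PowerSeries ℂ)
          • (1 : Matrix (Fin 2 × Fin 2) (Fin 2 × Fin 2) (PowerSeries ℂ)) := by
    rw [Matrix.smul_mul, Matrix.mul_smul, hPP, smul_smul, ← pow_two]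
  have expand : ((1 : Matrix (Fin 2 × Fin 2) (Fin 2 × Fin 2) (PowerSeries ℂ))
        - (PowerSeries.X : PowerSeries ℂ) • P) *
      ((1 : Matrix (Fin 2 × Fin 2) (Fin 2 × Fin 2) (PowerSeries ℂ))
        + (PowerSeries.X : PowerSeries ℂ) • P)
      = ((1 - PowerSeries.X ^ 2 : PowerSeries ℂ))
          • (1 : Matrix (Fin 2 × Fin 2) (Fin 2 × Fin 2) (PowerSeries ℂ)) := by
    rw [sub_mul, mul_add, mul_add, one_mul, one_mul, mul_one, hXP, sub_smul, one_smul]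
    abel
  rw [Matrix.smul_mul, Matrix.mul_smul, smul_smul, expand, smul_smul, key, one_smul]
end

section
/- Let l ≥ 1 be an integer and let α_1, …, α_l, c_1, …, c_l ∈ ℂ satisfy Σ_{i=1}^l α_i·c_i^k = δ_{k, l−1}·(l−1)! for every k with 0 ≤ k ≤ l−1 (with the convention c^0 = 1, including 0^0 = 1). Then for every polynomial F ∈ ℂ[X], in the polynomial ring ℂ[X, Y] the element Σ_{i=1}^l α_i · F(X + c_i·Y) is divisible by Y^{l−1}; more precisely, there exists H ∈ ℂ[X, Y] such that Σ_{i=1}^l α_i · F(X + c_i·Y) = Y^{l−1} · F^{(l−1)}(X) + Y^l · H, where F^{(l−1)} denotes the (l−1)-st formal derivative of F and F(X + c·Y) denotes the image of F under the substitution X ↦ X + c·Y. -/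
open MvPolynomial

lemma iter_deriv_add (k : ℕ) (p q : Polynomial ℂ) :
    Polynomial.derivative^[k] (p + q)
      = Polynomial.derivative^[k] p + Polynomial.derivative^[k] q := by
  induction k generalizing p q with
  | zero => simp
  | succ k ih => simp [Function.iterate_succ_apply, Polynomial.derivative_add, ih]

lemma monomial_case (l : ℕ) (hl : 1 ≤ l) (α c : Fin l → ℂ)
    (h : ∀ k : ℕ, k < l →
      ∑ i, α i * c i ^ k = if k = l - 1 then ((l - 1).factorial : ℂ) else 0)
    (n : ℕ) :
    ∃ H : MvPolynomial (Fin 2) ℂ,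
      ∑ i, MvPolynomial.C (α i) *
          Polynomial.aeval
            (MvPolynomial.X 0 + MvPolynomial.C (c i) * MvPolynomial.X 1 :
              MvPolynomial (Fin 2) ℂ) ((Polynomial.X : Polynomial ℂ) ^ n)
        = (MvPolynomial.X 1 : MvPolynomial (Fin 2) ℂ) ^ (l - 1) *
              Polynomial.aeval (MvPolynomial.X 0 : MvPolynomial (Fin 2) ℂ)
                (Polynomial.derivative^[l - 1] ((Polynomial.X : Polynomial ℂ) ^ n))
            + (MvPolynomial.X 1 : MvPolynomial (Fin 2) ℂ) ^ l * H := by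
  set s : ℕ → ℂ := fun k => ∑ i, α i * c i ^ k with hs
  set f : ℕ → MvPolynomial (Fin 2) ℂ := fun k =>
    MvPolynomial.C (s k) * (MvPolynomial.X 1) ^ k * (MvPolynomial.X 0) ^ (n - k)
      * (n.choose k : MvPolynomial (Fin 2) ℂ) with hf
  have hLHS : ∑ i, MvPolynomial.C (α i) *
      Polynomial.aeval
        (MvPolynomial.X 0 + MvPolynomial.C (c i) * MvPolynomial.X 1 :
          MvPolynomial (Fin 2) ℂ) ((Polynomial.X : Polynomial ℂ) ^ n)
      = ∑ k ∈ Finset.range (n + 1), f k := by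
    have expand : ∀ i : Fin l,
        Polynomial.aeval
          (MvPolynomial.X 0 + MvPolynomial.C (c i) * MvPolynomial.X 1 :
            MvPolynomial (Fin 2) ℂ) ((Polynomial.X : Polynomial ℂ) ^ n)
        = ∑ k ∈ Finset.range (n + 1),
            (MvPolynomial.C (c i)) ^ k * (MvPolynomial.X 1) ^ k
              * (MvPolynomial.X 0) ^ (n - k) * (n.choose k : MvPolynomial (Fin 2) ℂ) := by
      intro i
      rw [map_pow, Polynomial.aeval_X, add_comm, add_pow]
      refine Finset.sum_congr rfl fun k _ => ?_
      ring
    rw [Finset.sum_congr rfl fun i _ => by rw [expand i]]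
    simp_rw [Finset.mul_sum]
    rw [Finset.sum_comm]
    refine Finset.sum_congr rfl fun k _ => ?_
    rw [hf, hs]
    simp only [map_sum, map_mul, map_pow]
    rw [Finset.sum_mul, Finset.sum_mul, Finset.sum_mul]
    refine Finset.sum_congr rfl fun i _ => ?_
    ring
  rw [hLHS]
  by_cases hn : n < l - 1
  · refine ⟨0, ?_⟩
    have hz : ∀ k ∈ Finset.range (n + 1), f k = 0 := by
      intro k hk
      rw [Finset.mem_range] at hk
      have hk1 : k < l - 1 := lt_of_lt_of_le (Nat.lt_of_lt_of_le hk (Nat.succ_le_of_lt hn)) le_rfl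
      have : s k = 0 := by
        rw [hs]; simpa [Nat.ne_of_lt hk1] using h k (lt_of_lt_of_le hk1 (Nat.sub_le l 1))
      simp [hf, this]
    rw [Finset.sum_eq_zero hz]
    rw [Polynomial.iterate_derivative_X_pow_eq_C_mul,
      Nat.descFactorial_eq_zero_iff_lt.2 hn]
    simp
  · push_neg at hn
    refine ⟨∑ k ∈ Finset.Ico l (n + 1), MvPolynomial.C (s k) * (MvPolynomial.X 1) ^ (k - l)
        * (MvPolynomial.X 0) ^ (n - k) * (n.choose k : MvPolynomial (Fin 2) ℂ), ?_⟩
    have hln : l ≤ n + 1 := le_trans (Nat.sub_le_iff_le_add.mp hn |>.trans (by omega)) le_rfl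
    have hsplit : Finset.range (n + 1) = Finset.range l ∪ Finset.Ico l (n + 1) := by
      ext k
      simp only [Finset.mem_range, Finset.mem_union, Finset.mem_Ico]
      omega
    rw [hsplit, Finset.sum_union (by
      simp [Finset.disjoint_left, Finset.mem_range, Finset.mem_Ico]
      omega)]
    have h1 : ∑ k ∈ Finset.range l, f k = f (l - 1) := by
      refine Finset.sum_eq_single (l - 1) (fun k hk hne => ?_) (fun hmem => ?_)
      · rw [Finset.mem_range] at hk
        have : s k = 0 := by rw [hs]; simpa [hne] using h k hk
        simp [hf, this]
      · exact absurd (Finset.mem_range.mpr (by omega)) hmem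
    rw [h1]
    have hsl : s (l - 1) = ((l - 1).factorial : ℂ) := by
      rw [hs]; simpa using h (l - 1) (by omega)
    have h2 : f (l - 1) = (MvPolynomial.X 1 : MvPolynomial (Fin 2) ℂ) ^ (l - 1) *
        Polynomial.aeval (MvPolynomial.X 0 : MvPolynomial (Fin 2) ℂ)
          (Polynomial.derivative^[l - 1] ((Polynomial.X : Polynomial ℂ) ^ n)) := by
      rw [Polynomial.iterate_derivative_X_pow_eq_C_mul,
        Nat.descFactorial_eq_factorial_mul_choose]
      simp only [hf, hsl]
      simp only [map_mul, map_pow, Polynomial.aeval_C, Polynomial.aeval_X, map_natCast,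
        Nat.cast_mul]
      ring
    rw [h2]
    congr 1
    rw [Finset.mul_sum]
    refine Finset.sum_congr rfl fun k hk => ?_
    rw [Finset.mem_Ico] at hk
    have : (MvPolynomial.X 1 : MvPolynomial (Fin 2) ℂ) ^ k
        = (MvPolynomial.X 1) ^ l * (MvPolynomial.X 1) ^ (k - l) := by
      rw [← pow_add, Nat.add_sub_cancel' hk.1]
    simp only [hf, this]; ring

/-- If `α_1, …, α_l, c_1, …, c_l ∈ ℂ` satisfy the Vandermonde system
`∑_i α_i·c_i^k = δ_{k, l−1}·(l−1)!` for `0 ≤ k ≤ l−1`, then for every polynomial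
`F ∈ ℂ[X]`, in `ℂ[X, Y]` one has
`∑_i α_i·F(X + c_i·Y) = Y^{l−1}·F^{(l−1)}(X) + Y^l·H` for some `H ∈ ℂ[X, Y]`. -/
theorem taylor_vanishing_of_vandermonde (l : ℕ) (hl : 1 ≤ l)
    (α c : Fin l → ℂ)
    (h : ∀ k : ℕ, k < l →
      ∑ i, α i * c i ^ k = if k = l - 1 then ((l - 1).factorial : ℂ) else 0)
    (F : Polynomial ℂ) :
    ∃ H : MvPolynomial (Fin 2) ℂ,
      ∑ i, MvPolynomial.C (α i) *
          Polynomial.aeval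
            (MvPolynomial.X 0 + MvPolynomial.C (c i) * MvPolynomial.X 1 :
              MvPolynomial (Fin 2) ℂ) F
        = (MvPolynomial.X 1 : MvPolynomial (Fin 2) ℂ) ^ (l - 1) *
              Polynomial.aeval (MvPolynomial.X 0 : MvPolynomial (Fin 2) ℂ)
                (Polynomial.derivative^[l - 1] F)
            + (MvPolynomial.X 1 : MvPolynomial (Fin 2) ℂ) ^ l * H := by
  induction F using Polynomial.induction_on' with
  | add p q hp hq =>
    obtain ⟨Hp, hHp⟩ := hp
    obtain ⟨Hq, hHq⟩ := hq
    refine ⟨Hp + Hq, ?_⟩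
    simp only [map_add, mul_add, Finset.sum_add_distrib, hHp, hHq, iter_deriv_add]
    ring
  | monomial n a =>
    obtain ⟨H, hH⟩ := monomial_case l hl α c h n
    refine ⟨MvPolynomial.C a * H, ?_⟩
    have hmon : (Polynomial.monomial n a : Polynomial ℂ) = Polynomial.C a * Polynomial.X ^ n := by
      rw [Polynomial.C_mul_X_pow_eq_monomial]
    rw [hmon]
    have hd : Polynomial.derivative^[l - 1] (Polynomial.C a * Polynomial.X ^ n)
        = Polynomial.C a * Polynomial.derivative^[l - 1] (Polynomial.X ^ n) :=
      Polynomial.iterate_derivative_C_mul a _ (l - 1)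
    simp only [map_mul, Polynomial.aeval_C, hd]
    calc ∑ i, MvPolynomial.C (α i) *
          ((algebraMap ℂ (MvPolynomial (Fin 2) ℂ)) a *
            Polynomial.aeval
              (MvPolynomial.X 0 + MvPolynomial.C (c i) * MvPolynomial.X 1 :
                MvPolynomial (Fin 2) ℂ) (Polynomial.X ^ n))
        = MvPolynomial.C a * ∑ i, MvPolynomial.C (α i) *
            Polynomial.aeval
              (MvPolynomial.X 0 + MvPolynomial.C (c i) * MvPolynomial.X 1 :
                MvPolynomial (Fin 2) ℂ) (Polynomial.X ^ n) := by
          rw [Finset.mul_sum]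
          refine Finset.sum_congr rfl fun i _ => ?_
          rw [MvPolynomial.algebraMap_eq]; ring
      _ = _ := by
          rw [hH, MvPolynomial.algebraMap_eq]
          ring
end
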